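/- arXiv:2504.14061 — 2 statements merged into one kernel-verified Lean document; each statement's English description precedes it below -/
import Mathlib

section
/- Conditional KL bounded by conditional mutual information: let (A_1,…,A_k, A_i, A_j) be jointly distributed finite random variables, and define the estimated joint distribution P̂[A_i, A_j] = ∑_{a} Pr[A_1,…,A_k = a] · Pr[A_i | A_1,…,A_k = a] · Pr[A_j | A_1,…,A_k = a]. Then D_KL(Pr[A_i, A_j] || P̂[A_i, A_j]) ≤ I(A_i; A_j | A_1,…,A_k), the conditional mutual information. -/
open Finset

/-- KL divergence between finite discrete distributions, with the convention
that terms with `P z = 0` contribute 0. -/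
noncomputable def klDiv {Z : Type*} [Fintype Z] (P Q : Z → ℝ) : ℝ :=
  ∑ z, if P z = 0 then 0 else P z * Real.log (P z / Q z)

variable {C I J : Type*} [Fintype C] [Fintype I] [Fintype J]

/-- `Pr[C = c]` obtained from the joint distribution `μ` of `(C, A_i, A_j)`. -/
noncomputable def pC (μ : C → I → J → ℝ) (c : C) : ℝ := ∑ i, ∑ j, μ c i j

/-- Conditional distribution `Pr[A_i = i | C = c]`. -/
noncomputable def condI (μ : C → I → J → ℝ) (c : C) (i : I) : ℝ :=
  (∑ j, μ c i j) / pC μ c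

/-- Conditional distribution `Pr[A_j = j | C = c]`. -/
noncomputable def condJ (μ : C → I → J → ℝ) (c : C) (j : J) : ℝ :=
  (∑ i, μ c i j) / pC μ c

/-- The estimated joint distribution
`P̂[A_i, A_j] = ∑_c Pr[C=c]·Pr[A_i|C=c]·Pr[A_j|C=c]`. -/
noncomputable def estJoint (μ : C → I → J → ℝ) (ij : I × J) : ℝ :=
  ∑ c, pC μ c * (condI μ c ij.1 * condJ μ c ij.2)

/-- The true joint distribution `Pr[A_i, A_j]` (marginalizing out `C`). -/
noncomputable def trueJoint (μ : C → I → J → ℝ) (ij : I × J) : ℝ :=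
  ∑ c, μ c ij.1 ij.2

/-- Conditional mutual information
`I(A_i; A_j | C) = ∑_c Pr[C=c]·D_KL(Pr[A_i,A_j|C=c] ‖ Pr[A_i|C=c] ⊗ Pr[A_j|C=c])`. -/
noncomputable def condMI (μ : C → I → J → ℝ) : ℝ :=
  ∑ c, pC μ c *
    klDiv (fun ij : I × J => μ c ij.1 ij.2 / pC μ c)
      (fun ij : I × J => condI μ c ij.1 * condJ μ c ij.2)

/-- Log-sum inequality. -/
lemma log_sum_ineq {ι : Type*} [Fintype ι] (a b : ι → ℝ)
    (ha : ∀ c, 0 ≤ a c) (hb : ∀ c, 0 ≤ b c) (hab : ∀ c, a c ≠ 0 → 0 < b c) :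
    (if (∑ c, a c) = 0 then 0 else (∑ c, a c) * Real.log ((∑ c, a c) / (∑ c, b c)))
      ≤ ∑ c, if a c = 0 then 0 else a c * Real.log (a c / b c) := by
  by_cases hS : (∑ c, a c) = 0
  · simp only [hS, if_true]
    apply Finset.sum_nonneg
    intro c _
    have : a c = 0 := by
      have := (Finset.sum_eq_zero_iff_of_nonneg (fun c _ => ha c)).1 hS c (mem_univ c)
      exact this
    simp [this]
  · simp only [hS, if_false]
    set S := ∑ c, a c with hSdef
    have hSpos : 0 < S := lt_of_le_of_ne (Finset.sum_nonneg fun c _ => ha c) (Ne.symm hS)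
    set t : Finset ι := univ.filter (fun c => a c ≠ 0) with ht
    have htne : t.Nonempty := by
      by_contra h
      rw [Finset.not_nonempty_iff_eq_empty] at h
      apply hS
      apply Finset.sum_eq_zero
      intro c _
      by_contra hc
      have : c ∈ t := by simp [ht, hc]
      simp [h] at this
    have hSt : ∑ c ∈ t, a c = S := by
      rw [hSdef]
      exact Finset.sum_filter_ne_zero univ
    -- Jensen: ∑ (a c / S) * log (b c / a c) ≤ log (∑ (a c / S) * (b c / a c))
    have hjensen := strictConcaveOn_log_Ioi.concaveOn.le_map_sum (t := t)
      (w := fun c => a c / S) (p := fun c => b c / a c)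
      (fun c _ => div_nonneg (ha c) hSpos.le)
      (by rw [← Finset.sum_div, hSt, div_self hS])
      (fun c hc => by
        have hac : a c ≠ 0 := (mem_filter.1 hc).2
        have : 0 < a c := lt_of_le_of_ne (ha c) (Ne.symm hac)
        exact Set.mem_Ioi.2 (div_pos (hab c hac) this))
    simp only [smul_eq_mul] at hjensen
    have hrw : ∀ c ∈ t, a c / S * (b c / a c) = b c / S := by
      intro c hc
      have hac : a c ≠ 0 := (mem_filter.1 hc).2
      field_simp
    rw [Finset.sum_congr rfl hrw] at hjensen
    have hTt : 0 < ∑ c ∈ t, b c := by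
      obtain ⟨c, hc⟩ := htne
      exact Finset.sum_pos' (fun c _ => hb c) ⟨c, hc, hab c (mem_filter.1 hc).2⟩
    have hTle : ∑ c ∈ t, b c ≤ ∑ c, b c :=
      Finset.sum_le_sum_of_subset_of_nonneg (subset_univ t) (fun c _ _ => hb c)
    have hT : 0 < ∑ c, b c := lt_of_lt_of_le hTt hTle
    have hlogmono : Real.log ((∑ c ∈ t, b c) / S) ≤ Real.log ((∑ c, b c) / S) :=
      Real.log_le_log (div_pos hTt hSpos) (by gcongr)
    rw [← Finset.sum_div] at hjensen
    have key : ∑ c ∈ t, a c / S * Real.log (b c / a c) ≤ Real.log ((∑ c, b c) / S) :=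
      hjensen.trans hlogmono
    -- multiply by S and flip
    have key2 : ∑ c ∈ t, a c * Real.log (b c / a c) ≤ S * Real.log ((∑ c, b c) / S) := by
      have := mul_le_mul_of_nonneg_left key hSpos.le
      rw [Finset.mul_sum] at this
      calc ∑ c ∈ t, a c * Real.log (b c / a c)
          = ∑ c ∈ t, S * (a c / S * Real.log (b c / a c)) := by
            apply Finset.sum_congr rfl
            intro c _
            field_simp
        _ ≤ S * Real.log ((∑ c, b c) / S) := this
    have hrhs : (∑ c, if a c = 0 then 0 else a c * Real.log (a c / b c))
        = ∑ c ∈ t, a c * Real.log (a c / b c) := by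
      rw [ht, Finset.sum_filter]
      apply Finset.sum_congr rfl
      intro c _
      by_cases h : a c = 0 <;> simp [h]
    rw [hrhs]
    have hneg : ∀ c ∈ t, a c * Real.log (a c / b c) = -(a c * Real.log (b c / a c)) := by
      intro c hc
      have hac : a c ≠ 0 := (mem_filter.1 hc).2
      have hbc : b c ≠ 0 := (hab c hac).ne'
      have hlog : Real.log (a c / b c) = -Real.log (b c / a c) := by
        rw [← Real.log_inv, inv_div]
      rw [hlog, mul_neg]
    rw [Finset.sum_congr rfl hneg, Finset.sum_neg_distrib]
    have heq : S * Real.log (S / ∑ c, b c) = -(S * Real.log ((∑ c, b c) / S)) := by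
      have hlog : Real.log (S / ∑ c, b c) = -Real.log ((∑ c, b c) / S) := by
        rw [← Real.log_inv, inv_div]
      rw [hlog, mul_neg]
    rw [heq]
    exact neg_le_neg key2

/-- The KL divergence from the true joint `Pr[A_i, A_j]` to the adaptively estimated
joint `P̂[A_i, A_j]` is at most the conditional mutual information `I(A_i; A_j | C)`. -/
theorem klDiv_est_le_condMI (μ : C → I → J → ℝ)
    (hμ : (∀ c i j, 0 ≤ μ c i j) ∧ ∑ c, ∑ i, ∑ j, μ c i j = 1)
    (hpos : ∀ c, 0 < pC μ c) :
    klDiv (trueJoint μ) (estJoint μ) ≤ condMI μ := by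
  obtain ⟨hnn, -⟩ := hμ
  have hcondMI : condMI μ = ∑ ij : I × J, ∑ c,
      if μ c ij.1 ij.2 = 0 then 0
      else μ c ij.1 ij.2 *
        Real.log (μ c ij.1 ij.2 / (pC μ c * (condI μ c ij.1 * condJ μ c ij.2))) := by
    rw [condMI, Finset.sum_comm]
    apply Finset.sum_congr rfl
    intro c _
    rw [klDiv, Finset.mul_sum]
    apply Finset.sum_congr rfl
    intro ij _
    have hp := (hpos c).ne'
    by_cases h : μ c ij.1 ij.2 = 0
    · simp [h, div_eq_zero_iff, hp]
    · have h' : μ c ij.1 ij.2 / pC μ c ≠ 0 := by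
        simp [div_eq_zero_iff, h, hp]
      simp only [h, h', if_false]
      rw [div_div]
      field_simp
    -- end
  rw [hcondMI, klDiv]
  apply Finset.sum_le_sum
  intro ij _
  have := log_sum_ineq (fun c => μ c ij.1 ij.2)
    (fun c => pC μ c * (condI μ c ij.1 * condJ μ c ij.2))
    (fun c => hnn c ij.1 ij.2)
    (fun c => by
      have := hpos c
      have h1 : 0 ≤ condI μ c ij.1 :=
        div_nonneg (Finset.sum_nonneg fun j _ => hnn c ij.1 j) this.le
      have h2 : 0 ≤ condJ μ c ij.2 :=
        div_nonneg (Finset.sum_nonneg fun i _ => hnn c i ij.2) this.le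
      positivity)
    (fun c hc => by
      have hp := hpos c
      have hμc : 0 < μ c ij.1 ij.2 := lt_of_le_of_ne (hnn c ij.1 ij.2) (Ne.symm hc)
      have h1 : 0 < condI μ c ij.1 := by
        apply div_pos _ hp
        exact lt_of_lt_of_le hμc (Finset.single_le_sum (fun j _ => hnn c ij.1 j) (mem_univ ij.2))
      have h2 : 0 < condJ μ c ij.2 := by
        apply div_pos _ hp
        exact lt_of_lt_of_le hμc (Finset.single_le_sum (fun i _ => hnn c i ij.2) (mem_univ ij.1))
      positivity)
  exact this
end

section
/- Rényi divergence between Gaussians: for μ, μ' ∈ ℝ^k and s > 0, the Rényi divergence of order α > 1 between N(μ, s²I_k) and N(μ', s²I_k) equals α·||μ − μ'||²₂ / (2s²). -/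
open MeasureTheory Real

/-- Density of the `N(μ, s²·I_k)` Gaussian on `ℝ^k`. -/
noncomputable def gaussPdf (k : ℕ) (s : ℝ) (μ x : EuclideanSpace ℝ (Fin k)) : ℝ :=
  (1 / (s * Real.sqrt (2 * Real.pi))) ^ k * Real.exp (-‖x - μ‖ ^ 2 / (2 * s ^ 2))

private lemma norm_convex_combination {E : Type*} [NormedAddCommGroup E]
    [InnerProductSpace ℝ E] (α : ℝ) (u v : E) :
    α * ‖u‖ ^ 2 + (1 - α) * ‖v‖ ^ 2
      = ‖α • u + (1 - α) • v‖ ^ 2 + α * (1 - α) * ‖u - v‖ ^ 2 := by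
  have h : ∀ w : E, ‖w‖ ^ 2 = inner ℝ w w := fun w => (real_inner_self_eq_norm_sq w).symm
  simp only [h, inner_add_add_self, inner_sub_sub_self, real_inner_smul_left,
    real_inner_smul_right]
  ring

/-- Rényi divergence between isotropic Gaussians:
`D_α(N(μ, s²I) ‖ N(μ', s²I)) = α·‖μ − μ'‖² / (2s²)` for `α > 1`, where
`D_α(P‖Q) = (α−1)⁻¹ log ∫ P(x)^α Q(x)^{1−α} dx`. -/
theorem renyiDiv_gaussians (k : ℕ) (s α : ℝ) (hs : 0 < s) (hα : 1 < α)
    (μ μ' : EuclideanSpace ℝ (Fin k)) :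
    (α - 1)⁻¹ * Real.log (∫ x, gaussPdf k s μ x ^ α * gaussPdf k s μ' x ^ (1 - α))
      = α * ‖μ - μ'‖ ^ 2 / (2 * s ^ 2) := by
  have hs2 : (0:ℝ) < 2 * s ^ 2 := by positivity
  have hC : (0:ℝ) < 1 / (s * Real.sqrt (2 * Real.pi)) := by positivity
  set C : ℝ := (1 / (s * Real.sqrt (2 * Real.pi))) ^ k with hCdef
  have hCpos : 0 < C := by positivity
  set m : EuclideanSpace ℝ (Fin k) := α • μ + (1 - α) • μ' with hm
  set D : ℝ := α * (α - 1) * ‖μ - μ'‖ ^ 2 / (2 * s ^ 2) with hD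
  -- pointwise identity
  have hpt : ∀ x : EuclideanSpace ℝ (Fin k),
      gaussPdf k s μ x ^ α * gaussPdf k s μ' x ^ (1 - α)
        = Real.exp D * (C * Real.exp (-(2 * s ^ 2)⁻¹ * ‖x - m‖ ^ 2)) := by
    intro x
    unfold gaussPdf
    rw [Real.mul_rpow (by positivity) (Real.exp_nonneg _),
        Real.mul_rpow (by positivity) (Real.exp_nonneg _),
        ← Real.exp_mul, ← Real.exp_mul]
    have hcomb : (C : ℝ) ^ α * (C : ℝ) ^ (1 - α) = C := by
      rw [← Real.rpow_add hCpos]; simp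
    calc C ^ α * Real.exp (-‖x - μ‖ ^ 2 / (2 * s ^ 2) * α)
          * (C ^ (1 - α) * Real.exp (-‖x - μ'‖ ^ 2 / (2 * s ^ 2) * (1 - α)))
        = (C ^ α * C ^ (1 - α)) * (Real.exp (-‖x - μ‖ ^ 2 / (2 * s ^ 2) * α)
            * Real.exp (-‖x - μ'‖ ^ 2 / (2 * s ^ 2) * (1 - α))) := by ring
      _ = C * Real.exp (-(α * ‖x - μ‖ ^ 2 + (1 - α) * ‖x - μ'‖ ^ 2) / (2 * s ^ 2)) := by
          rw [hcomb, ← Real.exp_add]; ring_nf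
      _ = Real.exp D * (C * Real.exp (-(2 * s ^ 2)⁻¹ * ‖x - m‖ ^ 2)) := by
          rw [norm_convex_combination α (x - μ) (x - μ')]
          have h1 : α • (x - μ) + (1 - α) • (x - μ') = x - m := by
            simp only [hm]
            module
          have h2 : (x - μ) - (x - μ') = μ' - μ := by abel
          rw [h1, h2, norm_sub_rev μ' μ,
            show Real.exp D * (C * Real.exp (-(2 * s ^ 2)⁻¹ * ‖x - m‖ ^ 2))
              = C * Real.exp (D + -(2 * s ^ 2)⁻¹ * ‖x - m‖ ^ 2) by
                rw [Real.exp_add]; ring]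
          congr 1
          rw [hD]
          field_simp
          ring
  rw [funext hpt] -- replace integrand
  rw [integral_const_mul, integral_const_mul]
  have hb : (0:ℝ) < (2 * s ^ 2)⁻¹ := by positivity
  have hint : ∫ x : EuclideanSpace ℝ (Fin k),
      Real.exp (-(2 * s ^ 2)⁻¹ * ‖x - m‖ ^ 2) = (π / (2 * s ^ 2)⁻¹) ^ ((k : ℝ) / 2) := by
    rw [integral_sub_right_eq_self
      (fun x : EuclideanSpace ℝ (Fin k) => Real.exp (-(2 * s ^ 2)⁻¹ * ‖x‖ ^ 2)) m]
    rw [GaussianFourier.integral_rexp_neg_mul_sq_norm hb, finrank_euclideanSpace_fin]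
  rw [hint]
  have hval : C * (π / (2 * s ^ 2)⁻¹) ^ ((k : ℝ) / 2) = 1 := by
    have hpi : π / (2 * s ^ 2)⁻¹ = 2 * π * s ^ 2 := by field_simp
    rw [hpi, hCdef]
    have hhalf : ((k : ℝ) / 2) = (1 / 2 : ℝ) * (k : ℝ) := by ring
    have hsqrt : (2 * π * s ^ 2) ^ (1 / 2 : ℝ) = Real.sqrt (2 * π) * s := by
      rw [← Real.sqrt_eq_rpow, Real.sqrt_mul (by positivity), Real.sqrt_sq hs.le]
    have h0 : Real.sqrt (2 * π) > 0 := Real.sqrt_pos.mpr (by positivity)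
    rw [hhalf, Real.rpow_mul (by positivity), hsqrt, Real.rpow_natCast, ← mul_pow,
      show 1 / (s * Real.sqrt (2 * π)) * (Real.sqrt (2 * π) * s) = 1
        by field_simp, one_pow]
  rw [hval, mul_one, Real.log_exp, hD]
  have hα1 : α - 1 ≠ 0 := sub_ne_zero.mpr (ne_of_gt hα)
  field_simp
end
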